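/- arXiv:2209.05372 — 2 statements merged into one kernel-verified Lean document; each statement's English description precedes it below -/
import Mathlib

section
/- (Robbins–Siegmund almost-supermartingale lemma) Let {z_t}, {δ_t}, {γ_t}, {ψ_t} be nonnegative, integrable stochastic processes on a probability space (Ω, Σ, P), adapted to a filtration {F_t}, satisfying E(z_{t+1} | F_t) ≤ (1 + δ_t) z_t + γ_t − ψ_t almost surely for all t. Let Ω₀ := {ω ∈ Ω : Σ_{t=0}^∞ δ_t(ω) < ∞ and Σ_{t=0}^∞ γ_t(ω) < ∞}. Then for almost every ω ∈ Ω₀, the limit lim_{t→∞} z_t(ω) exists (and is finite), and Σ_{t=0}^∞ ψ_t(ω) < ∞. In particular, if P(Ω₀) = 1, then {z_t} is bounded almost surely. -/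
open MeasureTheory Filter

noncomputable def rsPp (d : ℕ → ℝ) (t : ℕ) : ℝ := ∏ s ∈ Finset.range t, (1 + d s)

noncomputable def rsY (d g p zz : ℕ → ℝ) (t : ℕ) : ℝ :=
  zz t / rsPp d t + ∑ s ∈ Finset.range t, p s / rsPp d (s + 1)
    - ∑ s ∈ Finset.range t, g s / rsPp d (s + 1)

lemma rsPp_pos {d : ℕ → ℝ} (hd : ∀ s, 0 ≤ d s) (t : ℕ) : 0 < rsPp d t :=
  Finset.prod_pos fun s _ => by linarith [hd s]

lemma one_le_rsPp {d : ℕ → ℝ} (hd : ∀ s, 0 ≤ d s) (t : ℕ) : 1 ≤ rsPp d t := by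
  show (1:ℝ) ≤ ∏ s ∈ Finset.range t, (1 + d s)
  calc (1:ℝ) = ∏ _s ∈ Finset.range t, (1:ℝ) := by simp
    _ ≤ ∏ s ∈ Finset.range t, (1 + d s) :=
        Finset.prod_le_prod (fun s _ => by norm_num) (fun s _ => by linarith [hd s])

lemma rsPp_succ (d : ℕ → ℝ) (t : ℕ) : rsPp d (t + 1) = rsPp d t * (1 + d t) :=
  Finset.prod_range_succ _ _

lemma rsPp_le_exp {d : ℕ → ℝ} (hd : ∀ s, 0 ≤ d s) (hsd : Summable d) (t : ℕ) :
    rsPp d t ≤ Real.exp (∑' s, d s) := by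
  calc rsPp d t ≤ ∏ s ∈ Finset.range t, Real.exp (d s) :=
        Finset.prod_le_prod (fun s _ => by linarith [hd s])
          (fun s _ => by linarith [Real.add_one_le_exp (d s)])
    _ = Real.exp (∑ s ∈ Finset.range t, d s) := (Real.exp_sum _ _).symm
    _ ≤ Real.exp (∑' s, d s) :=
        Real.exp_le_exp.2 (hsd.sum_le_tsum _ (fun s _ => hd s))

lemma rs_alg (d g p zz : ℕ → ℝ) (hd : ∀ s, 0 ≤ d s) (t : ℕ) :
    (rsPp d (t + 1))⁻¹ * ((1 + d t) * zz t + g t - p t)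
      + ∑ s ∈ Finset.range (t + 1), p s / rsPp d (s + 1)
      - ∑ s ∈ Finset.range (t + 1), g s / rsPp d (s + 1) = rsY d g p zz t := by
  have h1 : (0:ℝ) < rsPp d t := rsPp_pos hd t
  have h2 : (0:ℝ) < 1 + d t := by linarith [hd t]
  rw [Finset.sum_range_succ, Finset.sum_range_succ, rsY, rsPp_succ]
  field_simp
  ring

lemma rs_det (d g p zz : ℕ → ℝ) (hd : ∀ s, 0 ≤ d s) (hg : ∀ s, 0 ≤ g s)
    (hp : ∀ s, 0 ≤ p s) (hz : ∀ s, 0 ≤ zz s) (hsd : Summable d) (hsg : Summable g)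
    {l : ℝ} (hY : Tendsto (fun t => rsY d g p zz t) atTop (nhds l)) :
    (∃ m : ℝ, Tendsto zz atTop (nhds m)) ∧ Summable p := by
  set C := Real.exp (∑' s, d s) with hC
  have hPpos : ∀ t, 0 < rsPp d t := rsPp_pos hd
  have hP1 : ∀ t, 1 ≤ rsPp d t := one_le_rsPp hd
  have hPle : ∀ t, rsPp d t ≤ C := rsPp_le_exp hd hsd
  -- summability of g s / Pp (s+1)
  have hsg' : Summable (fun s => g s / rsPp d (s + 1)) :=
    hsg.of_nonneg_of_le (fun s => div_nonneg (hg s) (hPpos _).le)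
      (fun s => div_le_self (hg s) (hP1 _))
  -- Y bounded above
  obtain ⟨cY, hcY⟩ := hY.bddAbove_range
  -- summability of p s / Pp (s+1)
  have hsp' : Summable (fun s => p s / rsPp d (s + 1)) := by
    refine summable_of_sum_range_le (c := cY + ∑' s, g s / rsPp d (s + 1))
      (fun s => div_nonneg (hp s) (hPpos _).le) (fun n => ?_)
    have h1 : rsY d g p zz n ≤ cY := hcY ⟨n, rfl⟩
    have h2 : ∑ s ∈ Finset.range n, g s / rsPp d (s + 1) ≤ ∑' s, g s / rsPp d (s + 1) :=
      hsg'.sum_le_tsum _ (fun s _ => div_nonneg (hg s) (hPpos _).le)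
    have h3 : 0 ≤ zz n / rsPp d n := div_nonneg (hz n) (hPpos _).le
    rw [rsY] at h1
    linarith
  -- summability of p
  have hsp : Summable p := by
    refine ((hsp'.mul_right C).of_nonneg_of_le hp (fun s => ?_))
    calc p s = p s / rsPp d (s + 1) * rsPp d (s + 1) :=
          (div_mul_cancel₀ _ (hPpos _).ne').symm
      _ ≤ p s / rsPp d (s + 1) * C :=
          mul_le_mul_of_nonneg_left (hPle _) (div_nonneg (hp s) (hPpos _).le)
  refine ⟨?_, hsp⟩
  -- convergence of zz / Pp
  have hψtend : Tendsto (fun t => ∑ s ∈ Finset.range t, p s / rsPp d (s + 1)) atTop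
      (nhds (∑' s, p s / rsPp d (s + 1))) := hsp'.hasSum.tendsto_sum_nat
  have hγtend : Tendsto (fun t => ∑ s ∈ Finset.range t, g s / rsPp d (s + 1)) atTop
      (nhds (∑' s, g s / rsPp d (s + 1))) := hsg'.hasSum.tendsto_sum_nat
  have hAz : Tendsto (fun t => zz t / rsPp d t) atTop
      (nhds (l - ∑' s, p s / rsPp d (s + 1) + ∑' s, g s / rsPp d (s + 1))) := by
    have := (hY.sub hψtend).add hγtend
    refine this.congr (fun t => ?_)
    rw [rsY]; ring
  -- Pp converges
  have hPmono : Monotone (rsPp d) := monotone_nat_of_le_succ (fun t => by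
    rw [rsPp_succ]
    nlinarith [hPpos t, hd t])
  have hPbdd : BddAbove (Set.range (rsPp d)) := ⟨C, by rintro x ⟨t, rfl⟩; exact hPle t⟩
  have hPtend : Tendsto (rsPp d) atTop (nhds (⨆ t, rsPp d t)) :=
    tendsto_atTop_ciSup hPmono hPbdd
  refine ⟨_, (hAz.mul hPtend).congr (fun t => ?_)⟩
  exact div_mul_cancel₀ _ (hPpos t).ne'

/-- Robbins–Siegmund almost-supermartingale lemma. -/
theorem robbins_siegmund
    {Ω : Type*} {mΩ : MeasurableSpace Ω} (μ : Measure Ω) [IsProbabilityMeasure μ]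
    (F : Filtration ℕ mΩ)
    (z δ γ ψ : ℕ → Ω → ℝ)
    (hz_nonneg : ∀ t ω, 0 ≤ z t ω)
    (hδ_nonneg : ∀ t ω, 0 ≤ δ t ω)
    (hγ_nonneg : ∀ t ω, 0 ≤ γ t ω)
    (hψ_nonneg : ∀ t ω, 0 ≤ ψ t ω)
    (hz_adapt : ∀ t, StronglyMeasurable[F t] (z t))
    (hδ_adapt : ∀ t, StronglyMeasurable[F t] (δ t))
    (hγ_adapt : ∀ t, StronglyMeasurable[F t] (γ t))
    (hψ_adapt : ∀ t, StronglyMeasurable[F t] (ψ t))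
    (hz_int : ∀ t, Integrable (z t) μ)
    (hδ_int : ∀ t, Integrable (δ t) μ)
    (hγ_int : ∀ t, Integrable (γ t) μ)
    (hψ_int : ∀ t, Integrable (ψ t) μ)
    (hineq : ∀ t, ∀ᵐ ω ∂μ,
      (μ[z (t + 1) | F t]) ω ≤ (1 + δ t ω) * z t ω + γ t ω - ψ t ω) :
    (∀ᵐ ω ∂μ,
      (Summable (fun t => δ t ω) ∧ Summable (fun t => γ t ω)) →
        (∃ l : ℝ, Filter.Tendsto (fun t => z t ω) Filter.atTop (nhds l)) ∧
          Summable (fun t => ψ t ω)) ∧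
    ((∀ᵐ ω ∂μ, Summable (fun t => δ t ω) ∧ Summable (fun t => γ t ω)) →
      ∀ᵐ ω ∂μ, Bornology.IsBounded (Set.range fun t => z t ω)) := by
  classical
  -- abbreviations
  set D : ℕ → Ω → ℝ := fun t ω => rsPp (fun s => δ s ω) t with hDdef
  set Y : ℕ → Ω → ℝ := fun t ω =>
    rsY (fun s => δ s ω) (fun s => γ s ω) (fun s => ψ s ω) (fun s => z s ω) t with hYdef
  have hDpos : ∀ t ω, 0 < D t ω := fun t ω => rsPp_pos (fun s => hδ_nonneg s ω) t
  have hD1 : ∀ t ω, 1 ≤ D t ω := fun t ω => one_le_rsPp (fun s => hδ_nonneg s ω) t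
  -- measurability of D
  have hD_meas : ∀ t u : ℕ, t ≤ u + 1 → Measurable[F u] (D t) := by
    intro t u htu
    have : Measurable[F u] (fun ω => ∏ s ∈ Finset.range t, (1 + δ s ω)) := by
      refine Finset.measurable_prod _ (fun s hs => ?_)
      have hs' : s ≤ u := by
        have := Finset.mem_range.1 hs; omega
      exact measurable_const.add (((hδ_adapt s).mono (F.mono hs')).measurable)
    exact this
  -- integrability of f / D t
  have hdivint : ∀ (f : Ω → ℝ), Integrable f μ → ∀ t : ℕ,
      Integrable (fun ω => f ω / D t ω) μ := by
    intro f hf t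
    refine hf.mono ((hf.1.aemeasurable.div
        ((hD_meas t t (by omega)).mono (F.le t) le_rfl).aemeasurable).aestronglyMeasurable)
      (ae_of_all _ fun ω => ?_)
    rw [norm_div, Real.norm_of_nonneg (hDpos t ω).le]
    exact div_le_self (norm_nonneg _) (hD1 t ω)
  -- integrability of Y
  have hYint : ∀ t, Integrable (Y t) μ := by
    intro t
    exact ((hdivint _ (hz_int t) t).add
        (integrable_finset_sum _ fun s _ => hdivint _ (hψ_int s) (s + 1))).sub
      (integrable_finset_sum _ fun s _ => hdivint _ (hγ_int s) (s + 1))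
  -- adaptedness of Y
  have hsum_meas : ∀ (f : ℕ → Ω → ℝ), (∀ s, StronglyMeasurable[F s] (f s)) → ∀ t u : ℕ,
      t ≤ u + 1 → Measurable[F u] (fun ω => ∑ s ∈ Finset.range t, f s ω / D (s + 1) ω) := by
    intro f hf t u htu
    refine Finset.measurable_sum _ (fun s hs => ?_)
    have hs' : s ≤ u := by have := Finset.mem_range.1 hs; omega
    have hs'' : s + 1 ≤ u + 1 := by omega
    exact (((hf s).mono (F.mono hs')).measurable).div (hD_meas (s + 1) u hs'')
  have hYadapt : ∀ t, StronglyMeasurable[F t] (Y t) := by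
    intro t
    refine Measurable.stronglyMeasurable ?_
    exact (((hz_adapt t).measurable.div (hD_meas t t (by omega))).add
        (hsum_meas ψ hψ_adapt t t (by omega))).sub (hsum_meas γ hγ_adapt t t (by omega))
  -- the supermartingale inequality for Y
  have hsup : ∀ t, μ[Y (t + 1)|F t] ≤ᵐ[μ] Y t := by
    intro t
    have hB : StronglyMeasurable[F t] (fun ω => (D (t + 1) ω)⁻¹) :=
      ((hD_meas (t + 1) t le_rfl).inv).stronglyMeasurable
    have hGint : Integrable (fun ω => (D (t + 1) ω)⁻¹ * z (t + 1) ω) μ := by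
      refine (hz_int (t + 1)).mono
        (((hB.measurable.mono (F.le t) le_rfl).stronglyMeasurable).aestronglyMeasurable.mul
          (hz_int (t + 1)).1)
        (ae_of_all _ fun ω => ?_)
      rw [norm_mul, Real.norm_of_nonneg (inv_nonneg.2 (hDpos (t + 1) ω).le)]
      calc (D (t + 1) ω)⁻¹ * ‖z (t + 1) ω‖ ≤ 1 * ‖z (t + 1) ω‖ :=
            mul_le_mul_of_nonneg_right (inv_le_one_of_one_le₀ (hD1 (t + 1) ω)) (norm_nonneg _)
        _ = ‖z (t + 1) ω‖ := one_mul _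
    have hCint : Integrable (fun ω => (∑ s ∈ Finset.range (t + 1), ψ s ω / D (s + 1) ω)
        - ∑ s ∈ Finset.range (t + 1), γ s ω / D (s + 1) ω) μ :=
      (integrable_finset_sum _ fun s _ => hdivint _ (hψ_int s) (s + 1)).sub
        (integrable_finset_sum _ fun s _ => hdivint _ (hγ_int s) (s + 1))
    have hCmeas : StronglyMeasurable[F t] (fun ω =>
        (∑ s ∈ Finset.range (t + 1), ψ s ω / D (s + 1) ω)
          - ∑ s ∈ Finset.range (t + 1), γ s ω / D (s + 1) ω) :=
      ((hsum_meas ψ hψ_adapt (t + 1) t le_rfl).sub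
        (hsum_meas γ hγ_adapt (t + 1) t le_rfl)).stronglyMeasurable
    have e1 : Y (t + 1) = (fun ω => (D (t + 1) ω)⁻¹ * z (t + 1) ω)
        + (fun ω => (∑ s ∈ Finset.range (t + 1), ψ s ω / D (s + 1) ω)
          - ∑ s ∈ Finset.range (t + 1), γ s ω / D (s + 1) ω) := by
      funext ω
      show rsY _ _ _ _ (t + 1) = _
      rw [rsY]
      show _ = (D (t + 1) ω)⁻¹ * z (t + 1) ω + _
      ring
    have h1 : μ[Y (t + 1)|F t] =ᵐ[μ]
        μ[(fun ω => (D (t + 1) ω)⁻¹ * z (t + 1) ω)|F t]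
          + μ[(fun ω => (∑ s ∈ Finset.range (t + 1), ψ s ω / D (s + 1) ω)
            - ∑ s ∈ Finset.range (t + 1), γ s ω / D (s + 1) ω)|F t] := by
      rw [e1]
      exact condExp_add hGint hCint (F t)
    have h2 : μ[(fun ω => (D (t + 1) ω)⁻¹ * z (t + 1) ω)|F t] =ᵐ[μ]
        (fun ω => (D (t + 1) ω)⁻¹) * μ[z (t + 1)|F t] :=
      condExp_mul_of_stronglyMeasurable_left hB hGint (hz_int (t + 1))
    have h3 : μ[(fun ω => (∑ s ∈ Finset.range (t + 1), ψ s ω / D (s + 1) ω)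
        - ∑ s ∈ Finset.range (t + 1), γ s ω / D (s + 1) ω)|F t] =ᵐ[μ]
        (fun ω => (∑ s ∈ Finset.range (t + 1), ψ s ω / D (s + 1) ω)
          - ∑ s ∈ Finset.range (t + 1), γ s ω / D (s + 1) ω) :=
      (condExp_of_stronglyMeasurable (F.le t) hCmeas hCint).le.antisymm
        (condExp_of_stronglyMeasurable (F.le t) hCmeas hCint).ge |>.symm ▸ EventuallyEq.rfl
    filter_upwards [h1, h2, h3, hineq t] with ω e1' e2' e3' e4'
    rw [e1', Pi.add_apply, e2', e3', Pi.mul_apply]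
    have hle : (D (t + 1) ω)⁻¹ * (μ[z (t + 1)|F t]) ω ≤
        (D (t + 1) ω)⁻¹ * ((1 + δ t ω) * z t ω + γ t ω - ψ t ω) :=
      mul_le_mul_of_nonneg_left e4' (inv_nonneg.2 (hDpos (t + 1) ω).le)
    have halg := rs_alg (fun s => δ s ω) (fun s => γ s ω) (fun s => ψ s ω)
      (fun s => z s ω) (fun s => hδ_nonneg s ω) t
    show _ ≤ rsY _ _ _ _ t
    rw [← halg]
    have : (∑ s ∈ Finset.range (t + 1), ψ s ω / D (s + 1) ω)
        - ∑ s ∈ Finset.range (t + 1), γ s ω / D (s + 1) ω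
        = (∑ s ∈ Finset.range (t + 1), ψ s ω / rsPp (fun s => δ s ω) (s + 1))
          - ∑ s ∈ Finset.range (t + 1), γ s ω / rsPp (fun s => δ s ω) (s + 1) := rfl
    linarith [hle]
  -- the stopped (indicator) processes
  set G : ℕ → ℕ → Set Ω := fun K t => {ω | ∑ s ∈ Finset.range t, γ s ω ≤ (K : ℝ)} with hGdef
  set ZK : ℕ → ℕ → Ω → ℝ := fun K t => (G K t).indicator (fun ω => Y t ω + (K : ℝ)) with hZdef
  have hGmeas : ∀ K t u : ℕ, t ≤ u + 1 → MeasurableSet[F u] (G K t) := by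
    intro K t u htu
    have hm : Measurable[F u] (fun ω => ∑ s ∈ Finset.range t, γ s ω) := by
      refine Finset.measurable_sum _ fun s hs => ?_
      have hs' : s ≤ u := by have := Finset.mem_range.1 hs; omega
      exact ((hγ_adapt s).mono (F.mono hs')).measurable
    exact measurableSet_le hm measurable_const
  have hGsub : ∀ K t, G K (t + 1) ⊆ G K t := by
    intro K t ω hω
    have h := hγ_nonneg t ω
    simp only [hGdef, Set.mem_setOf_eq, Finset.sum_range_succ] at hω ⊢
    linarith
  have hYK : ∀ K t : ℕ, ∀ ω, ω ∈ G K t → 0 ≤ Y t ω + (K : ℝ) := by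
    intro K t ω hω
    simp only [hGdef, Set.mem_setOf_eq] at hω
    have h1 : ∑ s ∈ Finset.range t, γ s ω / D (s + 1) ω ≤ ∑ s ∈ Finset.range t, γ s ω :=
      Finset.sum_le_sum fun s _ => div_le_self (hγ_nonneg s ω) (hD1 (s + 1) ω)
    have h2 : (0:ℝ) ≤ ∑ s ∈ Finset.range t, ψ s ω / D (s + 1) ω :=
      Finset.sum_nonneg fun s _ => div_nonneg (hψ_nonneg s ω) (hDpos (s + 1) ω).le
    have h3 : (0:ℝ) ≤ z t ω / D t ω := div_nonneg (hz_nonneg t ω) (hDpos t ω).le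
    have hYeq : Y t ω = z t ω / D t ω + (∑ s ∈ Finset.range t, ψ s ω / D (s + 1) ω)
        - ∑ s ∈ Finset.range t, γ s ω / D (s + 1) ω := rfl
    rw [hYeq]; linarith
  have hZnonneg : ∀ K t : ℕ, ∀ ω, 0 ≤ ZK K t ω := fun K t ω =>
    Set.indicator_nonneg (fun x hx => hYK K t x hx) ω
  have key : ∀ K : ℕ, ∀ᵐ ω ∂μ, ∃ c, Tendsto (fun t => ZK K t ω) atTop (nhds c) := by
    intro K
    have hZadapt : StronglyAdapted F (ZK K) := fun t =>
      ((hYadapt t).add stronglyMeasurable_const).indicator (hGmeas K t t (by omega))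
    have hZint : ∀ t, Integrable (ZK K t) μ := fun t =>
      ((hYint t).add (integrable_const _)).indicator (F.le t _ (hGmeas K t t (by omega)))
    have hZcond : ∀ t, μ[ZK K (t + 1)|F t] ≤ᵐ[μ] ZK K t := by
      intro t
      have h1 : μ[ZK K (t + 1)|F t] =ᵐ[μ]
          (G K (t + 1)).indicator (μ[(fun ω => Y (t + 1) ω + (K : ℝ))|F t]) :=
        condExp_indicator ((hYint (t + 1)).add (integrable_const _)) (hGmeas K (t + 1) t le_rfl)
      have h2 : μ[(fun ω => Y (t + 1) ω + (K : ℝ))|F t] =ᵐ[μ]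
          μ[Y (t + 1)|F t] + μ[(fun _ => (K : ℝ))|F t] :=
        condExp_add (hYint (t + 1)) (integrable_const (K : ℝ)) (F t)
      filter_upwards [h1, h2, hsup t] with ω e1 e2 e3
      rw [e1]
      by_cases hω : ω ∈ G K (t + 1)
      · rw [Set.indicator_of_mem hω, e2, Pi.add_apply,
          congrFun (condExp_const (F.le t) (K : ℝ)) ω]
        have hωt : ω ∈ G K t := hGsub K t hω
        have hzt : ZK K t ω = Y t ω + (K : ℝ) := Set.indicator_of_mem hωt _
        rw [hzt]
        linarith
      · rw [Set.indicator_of_notMem hω]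
        exact hZnonneg K t ω
    have hZsuper : Supermartingale (ZK K) F μ := supermartingale_nat hZadapt hZint hZcond
    have hlt : eLpNorm (ZK K 0) 1 μ < ⊤ := (memLp_one_iff_integrable.2 (hZint 0)).2
    have heq : ∀ m : ℕ, eLpNorm (ZK K m) 1 μ = ENNReal.ofReal (∫ ω, ZK K m ω ∂μ) := by
      intro m
      rw [eLpNorm_one_eq_lintegral_enorm, ← ofReal_integral_norm_eq_lintegral_enorm (hZint m)]
      congr 1
      exact integral_congr_ae (ae_of_all _ fun ω => (Real.norm_of_nonneg (hZnonneg K m ω)))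
    have hbdd : ∀ n : ℕ, eLpNorm (ZK K n) 1 μ ≤ (eLpNorm (ZK K 0) 1 μ).toNNReal := by
      intro n
      have hmono : ∫ ω, ZK K n ω ∂μ ≤ ∫ ω, ZK K 0 ω ∂μ := by
        have := hZsuper.setIntegral_le (Nat.zero_le n) (MeasurableSet.univ (α := Ω))
        simpa [setIntegral_univ] using this
      rw [ENNReal.coe_toNNReal hlt.ne, heq n, heq 0]
      exact ENNReal.ofReal_le_ofReal hmono
    have := hZsuper.neg.exists_ae_tendsto_of_bdd
      (R := (eLpNorm (ZK K 0) 1 μ).toNNReal) (fun n => by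
        rw [show (-ZK K) n = -(ZK K n) from rfl, eLpNorm_neg]; exact hbdd n)
    filter_upwards [this] with ω hc
    obtain ⟨c, hc⟩ := hc
    exact ⟨-c, by simpa using hc.neg⟩
  -- main conclusion
  have main : ∀ᵐ ω ∂μ,
      (Summable (fun t => δ t ω) ∧ Summable (fun t => γ t ω)) →
        (∃ l : ℝ, Tendsto (fun t => z t ω) atTop (nhds l)) ∧
          Summable (fun t => ψ t ω) := by
    filter_upwards [ae_all_iff.2 key] with ω hω hsum
    obtain ⟨hsd, hsg⟩ := hsum
    obtain ⟨K, hK⟩ := exists_nat_ge (∑' s, γ s ω)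
    have hmem : ∀ t, ω ∈ G K t := by
      intro t
      simp only [hGdef, Set.mem_setOf_eq]
      exact le_trans (hsg.sum_le_tsum (Finset.range t) (fun s _ => hγ_nonneg s ω)) hK
    obtain ⟨c, hc⟩ := hω K
    have hc' : Tendsto (fun t => Y t ω + (K : ℝ)) atTop (nhds c) :=
      hc.congr fun t => Set.indicator_of_mem (hmem t) _
    have hYt : Tendsto (fun t => Y t ω) atTop (nhds (c - K)) := by
      simpa using hc'.sub (tendsto_const_nhds (x := (K : ℝ)))
    exact rs_det _ _ _ _ (fun s => hδ_nonneg s ω) (fun s => hγ_nonneg s ω)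
      (fun s => hψ_nonneg s ω) (fun s => hz_nonneg s ω) hsd hsg hYt
  refine ⟨main, fun hsum => ?_⟩
  filter_upwards [main, hsum] with ω h1 h2
  obtain ⟨⟨l, hl⟩, -⟩ := h1 h2
  exact hl.cauchySeq.isBounded_range
end

section
/- Let g ∈ ℝ^d be a fixed vector, let N ≥ 1, and let κ_1, …, κ_N be independent random indices, each uniformly distributed on {1, …, d}. Define the random vector φ := (d/N) Σ_{n=1}^N e_{κ_n} ∘ g. Then E(φ) = g and E(‖φ − g‖²) = ((d − 1)/N) ‖g‖²; in particular E(‖φ − g‖²) ≤ (d − 1) ‖g‖². -/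
open MeasureTheory ProbabilityTheory

/-- Multiple-coordinate sampling with replacement: if `κ_1, …, κ_N` are i.i.d. uniform
on `{1,…,d}` and `φ = (d/N) Σ_n e_{κ_n} ∘ g`, then `E(φ) = g` and
`E(‖φ − g‖²) = ((d−1)/N) ‖g‖² ≤ (d−1) ‖g‖²`. -/
theorem multi_coordinate_sampling_mean_variance
    {d N : ℕ} (hd : 1 ≤ d) (hN : 1 ≤ N) (g : EuclideanSpace ℝ (Fin d))
    {Ω : Type*} {mΩ : MeasurableSpace Ω} (μ : Measure Ω) [IsProbabilityMeasure μ]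
    (κ : Fin N → Ω → Fin d) (hκ : ∀ n, Measurable (κ n))
    (hunif : ∀ n, ∀ i : Fin d, μ {ω | κ n ω = i} = (d : ENNReal)⁻¹)
    (hindep : iIndepFun κ μ)
    (φ : Ω → EuclideanSpace ℝ (Fin d))
    (hφ : ∀ ω, φ ω = ((d : ℝ) / N) • ∑ n : Fin N, EuclideanSpace.single (κ n ω) (g (κ n ω))) :
    (∫ ω, φ ω ∂μ) = g ∧
    (∫ ω, ‖φ ω - g‖ ^ 2 ∂μ) = (((d : ℝ) - 1) / N) * ‖g‖ ^ 2 ∧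
    (∫ ω, ‖φ ω - g‖ ^ 2 ∂μ) ≤ ((d : ℝ) - 1) * ‖g‖ ^ 2 := by
  classical
  have hd0 : (d : ℝ) ≠ 0 := by positivity
  have hN0 : (N : ℝ) ≠ 0 := by positivity
  set c : ℝ := (d : ℝ) / N with hc
  -- indicator functions
  set X : Fin N → Fin d → Ω → ℝ := fun n i ω => if κ n ω = i then 1 else 0 with hXdef
  have hA : ∀ n i, MeasurableSet {ω | κ n ω = i} := fun n i =>
    (hκ n) (measurableSet_singleton i)
  have hXind : ∀ n i, X n i = Set.indicator {ω | κ n ω = i} (fun _ => (1:ℝ)) := by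
    intro n i; funext ω; simp [hXdef, Set.indicator_apply]
  have hXint : ∀ n i, Integrable (X n i) μ := by
    intro n i; rw [hXind]; exact (integrable_const 1).indicator (hA n i)
  have htoReal : ((d : ENNReal)⁻¹).toReal = (d : ℝ)⁻¹ := by
    simp
  have hX1 : ∀ n i, ∫ ω, X n i ω ∂μ = (d : ℝ)⁻¹ := by
    intro n i
    rw [hXind, integral_indicator_const _ (hA n i), measureReal_def, hunif n i, htoReal, smul_eq_mul, mul_one]
  -- products
  have hXXint : ∀ n m i, Integrable (fun ω => X n i ω * X m i ω) μ := by
    intro n m i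
    have : (fun ω => X n i ω * X m i ω)
        = Set.indicator ({ω | κ n ω = i} ∩ {ω | κ m ω = i}) (fun _ => (1:ℝ)) := by
      funext ω
      by_cases h1 : κ n ω = i <;> by_cases h2 : κ m ω = i <;>
        simp [hXdef, Set.indicator_apply, h1, h2]
    rw [this]
    exact (integrable_const 1).indicator ((hA n i).inter (hA m i))
  have hXX : ∀ n m i, n ≠ m →
      ∫ ω, X n i ω * X m i ω ∂μ = (d : ℝ)⁻¹ * (d : ℝ)⁻¹ := by
    intro n m i hnm
    have heq : (fun ω => X n i ω * X m i ω)
        = Set.indicator ({ω | κ n ω = i} ∩ {ω | κ m ω = i}) (fun _ => (1:ℝ)) := by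
      funext ω
      by_cases h1 : κ n ω = i <;> by_cases h2 : κ m ω = i <;>
        simp [hXdef, Set.indicator_apply, h1, h2]
    have hmeas : μ ({ω | κ n ω = i} ∩ {ω | κ m ω = i}) = (d : ENNReal)⁻¹ * (d : ENNReal)⁻¹ := by
      have : {ω | κ n ω = i} = κ n ⁻¹' {i} := rfl
      have h2 : {ω | κ m ω = i} = κ m ⁻¹' {i} := rfl
      rw [this, h2, (hindep.indepFun hnm).measure_inter_preimage_eq_mul _ _
        (measurableSet_singleton i) (measurableSet_singleton i)]
      have e1 : κ n ⁻¹' {i} = {ω | κ n ω = i} := rfl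
      have e2 : κ m ⁻¹' {i} = {ω | κ m ω = i} := rfl
      rw [e1, e2, hunif n i, hunif m i]
    rw [heq, integral_indicator_const _ ((hA n i).inter (hA m i)), measureReal_def, hmeas, smul_eq_mul, mul_one]
    simp [ENNReal.toReal_mul]
  have hXsq : ∀ n i, (fun ω => X n i ω * X n i ω) = X n i := by
    intro n i; funext ω; by_cases h : κ n ω = i <;> simp [hXdef, h]
  -- S
  set S : Fin d → Ω → ℝ := fun i ω => ∑ n : Fin N, X n i ω with hSdef
  have hSint : ∀ i, Integrable (S i) μ := fun i => integrable_finset_sum _ fun n _ => hXint n i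
  have hS1 : ∀ i, ∫ ω, S i ω ∂μ = (N : ℝ) * (d : ℝ)⁻¹ := by
    intro i
    rw [hSdef]
    rw [integral_finset_sum _ fun n _ => hXint n i]
    simp [hX1, mul_comm]
  have hSsq : ∀ i, (fun ω => S i ω ^ 2)
      = fun ω => ∑ n : Fin N, ∑ m : Fin N, X n i ω * X m i ω := by
    intro i; funext ω
    rw [sq]
    exact Finset.sum_mul_sum _ _ _ _
  have hSsqint : ∀ i, Integrable (fun ω => S i ω ^ 2) μ := by
    intro i
    rw [hSsq]
    exact integrable_finset_sum _ fun n _ => integrable_finset_sum _ fun m _ => hXXint n m i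
  have hS2 : ∀ i, ∫ ω, S i ω ^ 2 ∂μ
      = (N : ℝ)^2 * ((d:ℝ)⁻¹ * (d:ℝ)⁻¹) + (N : ℝ) * ((d:ℝ)⁻¹ - (d:ℝ)⁻¹ * (d:ℝ)⁻¹) := by
    intro i
    rw [hSsq]
    rw [integral_finset_sum _ fun n _ => integrable_finset_sum _ fun m _ => hXXint n m i]
    rw [Finset.sum_congr rfl fun n (_ : n ∈ Finset.univ) =>
      integral_finset_sum Finset.univ fun m _ => hXXint n m i]
    have : ∀ n : Fin N, ∑ m : Fin N, ∫ ω, X n i ω * X m i ω ∂μ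
        = (N : ℝ) * ((d:ℝ)⁻¹ * (d:ℝ)⁻¹) + ((d:ℝ)⁻¹ - (d:ℝ)⁻¹ * (d:ℝ)⁻¹) := by
      intro n
      have hterm : ∀ m : Fin N, ∫ ω, X n i ω * X m i ω ∂μ
          = (d:ℝ)⁻¹ * (d:ℝ)⁻¹ + (if n = m then (d:ℝ)⁻¹ - (d:ℝ)⁻¹ * (d:ℝ)⁻¹ else 0) := by
        intro m
        by_cases h : n = m
        · subst h
          rw [hXsq n i, hX1 n i]
          simp
        · rw [hXX n m i h]
          simp [h]
      rw [Finset.sum_congr rfl fun m _ => hterm m]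
      rw [Finset.sum_add_distrib, Finset.sum_const, Finset.sum_ite_eq]
      simp [mul_comm]
    rw [Finset.sum_congr rfl fun n _ => this n, Finset.sum_const]
    simp only [Finset.card_univ, Fintype.card_fin, nsmul_eq_mul]
    ring
  -- f
  set f : Fin d → Ω → ℝ := fun i ω => c * S i ω - 1 with hfdef
  have hfsq : ∀ i ω, f i ω ^ 2 = c^2 * S i ω ^ 2 - (2*c) * S i ω + 1 := by
    intro i ω; rw [hfdef]; ring
  have hfsqint : ∀ i, Integrable (fun ω => f i ω ^ 2) μ := by
    intro i
    have : (fun ω => f i ω ^ 2)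
        = fun ω => c^2 * S i ω ^ 2 - (2*c) * S i ω + 1 := funext fun ω => hfsq i ω
    rw [this]
    exact ((((hSsqint i).const_mul _).sub ((hSint i).const_mul _)).add (integrable_const 1))
  have hfint2 : ∀ i, ∫ ω, f i ω ^ 2 ∂μ = ((d:ℝ) - 1) / N := by
    intro i
    have : (fun ω => f i ω ^ 2)
        = fun ω => c^2 * S i ω ^ 2 - (2*c) * S i ω + 1 := funext fun ω => hfsq i ω
    rw [this]
    have hint1 : Integrable (fun ω => c^2 * S i ω ^ 2) μ := by
      exact (hSsqint i).const_mul _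
    have hint2 : Integrable (fun ω => (2*c) * S i ω) μ := by
      exact (hSint i).const_mul _
    have hint12 : Integrable (fun ω => c^2 * S i ω ^ 2 - (2*c) * S i ω) μ := by
      exact hint1.sub hint2
    rw [integral_add hint12 (integrable_const 1), integral_sub hint1 hint2,
      integral_const_mul, integral_const_mul, hS1 i, hS2 i, integral_const]
    simp only [measureReal_def, measure_univ, ENNReal.toReal_one, smul_eq_mul, mul_one, one_mul]
    rw [hc]
    field_simp
    ring
  -- coordinate identity
  have hcoord : ∀ ω (i : Fin d), φ ω i = c * (g i * S i ω) := by
    intro ω i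
    rw [hφ ω]
    rw [PiLp.smul_apply, smul_eq_mul]
    congr 1
    have : (∑ n : Fin N, EuclideanSpace.single (κ n ω) (g (κ n ω))) i
        = ∑ n : Fin N, (EuclideanSpace.single (κ n ω) (g (κ n ω)) : EuclideanSpace ℝ (Fin d)) i := by
      rw [WithLp.ofLp_sum]; exact Finset.sum_apply i _ _
    rw [this, hSdef, Finset.mul_sum]
    refine Finset.sum_congr rfl fun n _ => ?_
    rw [EuclideanSpace.single_apply]
    by_cases h : κ n ω = i
    · subst h; simp [hXdef]
    · simp [hXdef, h, Ne.symm h]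
  have hdiff : ∀ ω (i : Fin d), φ ω i - g i = g i * f i ω := by
    intro ω i
    rw [hcoord ω i, hfdef]
    ring
  -- norm identity
  have hnorm : ∀ ω, ‖φ ω - g‖ ^ 2 = ∑ i : Fin d, (g i)^2 * f i ω ^ 2 := by
    intro ω
    rw [EuclideanSpace.norm_eq]
    rw [Real.sq_sqrt (by positivity)]
    refine Finset.sum_congr rfl fun i _ => ?_
    have : (φ ω - g) i = φ ω i - g i := rfl
    rw [this, hdiff ω i]
    rw [Real.norm_eq_abs, sq_abs]
    ring
  have hgnorm : ‖g‖ ^ 2 = ∑ i : Fin d, (g i)^2 := by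
    rw [EuclideanSpace.norm_eq, Real.sq_sqrt (by positivity)]
    exact Finset.sum_congr rfl fun i _ => by rw [Real.norm_eq_abs, sq_abs]
  -- variance
  have hvar : (∫ ω, ‖φ ω - g‖ ^ 2 ∂μ) = (((d : ℝ) - 1) / N) * ‖g‖ ^ 2 := by
    calc (∫ ω, ‖φ ω - g‖ ^ 2 ∂μ) = ∫ ω, ∑ i : Fin d, (g i)^2 * f i ω ^ 2 ∂μ := by
          exact integral_congr_ae (Filter.Eventually.of_forall fun ω => hnorm ω)
      _ = ∑ i : Fin d, ∫ ω, (g i)^2 * f i ω ^ 2 ∂μ :=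
          integral_finset_sum _ fun i _ => (hfsqint i).const_mul _
      _ = ∑ i : Fin d, (g i)^2 * (((d:ℝ) - 1) / N) := by
          refine Finset.sum_congr rfl fun i _ => ?_
          rw [integral_const_mul, hfint2 i]
      _ = (((d : ℝ) - 1) / N) * ‖g‖ ^ 2 := by
          rw [hgnorm, Finset.mul_sum]
          exact Finset.sum_congr rfl fun i _ => by ring
  -- mean
  have hsum_single : (∑ i : Fin d, EuclideanSpace.single i (g i)) = g := by
    refine PiLp.ext fun j => ?_
    rw [WithLp.ofLp_sum, Finset.sum_apply]
    simp [EuclideanSpace.single_apply]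
  have hFeq : ∀ n : Fin N, (fun ω => (EuclideanSpace.single (κ n ω) (g (κ n ω)) : EuclideanSpace ℝ (Fin d)))
      = fun ω => ∑ i : Fin d, X n i ω • (EuclideanSpace.single i (g i) : EuclideanSpace ℝ (Fin d)) := by
    intro n; funext ω
    have : ∀ i : Fin d, X n i ω • (EuclideanSpace.single i (g i) : EuclideanSpace ℝ (Fin d))
        = if κ n ω = i then EuclideanSpace.single i (g i) else 0 := by
      intro i
      by_cases h : κ n ω = i <;> simp [hXdef, h]
    rw [Finset.sum_congr rfl fun i _ => this i, Finset.sum_ite_eq]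
    simp
  have hterm_ind : ∀ (n : Fin N) (i : Fin d),
      (fun ω => X n i ω • (EuclideanSpace.single i (g i) : EuclideanSpace ℝ (Fin d)))
      = Set.indicator {ω | κ n ω = i} (fun _ => (EuclideanSpace.single i (g i) : EuclideanSpace ℝ (Fin d))) := by
    intro n i; funext ω
    by_cases h : κ n ω = i <;> simp [hXdef, Set.indicator_apply, h]
  have hterm_int : ∀ (n : Fin N) (i : Fin d),
      Integrable (fun ω => X n i ω • (EuclideanSpace.single i (g i) : EuclideanSpace ℝ (Fin d))) μ := by
    intro n i; rw [hterm_ind n i]; exact (integrable_const _).indicator (hA n i)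
  have hFint : ∀ n : Fin N,
      Integrable (fun ω => (EuclideanSpace.single (κ n ω) (g (κ n ω)) : EuclideanSpace ℝ (Fin d))) μ := by
    intro n; rw [hFeq n]; exact integrable_finset_sum _ fun i _ => hterm_int n i
  have hFmean : ∀ n : Fin N,
      ∫ ω, (EuclideanSpace.single (κ n ω) (g (κ n ω)) : EuclideanSpace ℝ (Fin d)) ∂μ
      = (d : ℝ)⁻¹ • g := by
    intro n
    rw [hFeq n, integral_finset_sum _ fun i _ => hterm_int n i]
    have : ∀ i : Fin d, ∫ ω, X n i ω • (EuclideanSpace.single i (g i) : EuclideanSpace ℝ (Fin d)) ∂μ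
        = (d : ℝ)⁻¹ • EuclideanSpace.single i (g i) := by
      intro i
      rw [hterm_ind n i, integral_indicator_const _ (hA n i), measureReal_def, hunif n i, htoReal]
    rw [Finset.sum_congr rfl fun i _ => this i, ← Finset.smul_sum, hsum_single]
  have hmean : (∫ ω, φ ω ∂μ) = g := by
    have : (∫ ω, φ ω ∂μ)
        = ∫ ω, c • ∑ n : Fin N, (EuclideanSpace.single (κ n ω) (g (κ n ω)) : EuclideanSpace ℝ (Fin d)) ∂μ :=
      integral_congr_ae (Filter.Eventually.of_forall fun ω => hφ ω)
    rw [this, integral_smul, integral_finset_sum _ fun n _ => hFint n,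
      Finset.sum_congr rfl fun n (_ : n ∈ Finset.univ) => hFmean n, Finset.sum_const]
    simp only [Finset.card_univ, Fintype.card_fin]
    rw [← Nat.cast_smul_eq_nsmul ℝ, smul_smul, smul_smul]
    have h1 : c * (N:ℝ) * (d:ℝ)⁻¹ = 1 := by rw [hc]; field_simp
    rw [h1, one_smul]
  refine ⟨hmean, hvar, ?_⟩
  rw [hvar]
  have h1 : ((d:ℝ) - 1) / N ≤ (d:ℝ) - 1 := by
    have hN1 : (1:ℝ) ≤ N := by exact_mod_cast hN
    have hd1 : (0:ℝ) ≤ (d:ℝ) - 1 := by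
      have : (1:ℝ) ≤ d := by exact_mod_cast hd
      linarith
    exact div_le_self hd1 hN1
  have hg2 : (0:ℝ) ≤ ‖g‖^2 := by positivity
  exact mul_le_mul_of_nonneg_right h1 hg2
end
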